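/- Let C be a triangulated category closed under all small products, and let D and C' be classes of objects of C with D ⊥ C' (i.e., Hom(X, Y) = 0 for all X ∈ D and Y ∈ C'). Then D ⊥ C'' where C'' is the coenvelope of C': Hom(X, Y) = 0 for all X ∈ D and all Y in the coenvelope of C'. -/

import Mathlib

open CategoryTheory CategoryTheory.Limits CategoryTheory.Pretriangulated CategoryTheory.Category

universe v u

variable (C : Type u) [Category.{v} C] [Preadditive C] [HasZeroObject C]
  [HasShift C ℤ] [∀ n : ℤ, (shiftFunctor C n).Additive] [Pretriangulated C]

variable {C} in
/-- The coenvelope of a class `S` of objects: the smallest class containing `S` and `0`,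
closed under all small products, and containing all homotopy limits `holim Y_i` of
sequences `φ_i : Y_{i+1} ⟶ Y_i` with `Y_0` in the class and (a choice of)
`Cone(φ_i)[-1]` in the class for every `i`. -/
inductive Coenvelope (S : Set C) : C → Prop
  | base (X : C) (hX : X ∈ S) : Coenvelope S X
  | zero (X : C) (hX : IsZero X) : Coenvelope S X
  | prod {I : Type v} (Z : I → C) [HasProduct Z]
      (hZ : ∀ i : I, Coenvelope S (Z i)) : Coenvelope S (∏ᶜ Z)
  | holim (Y : ℕ → C) [HasProduct Y] (φ : ∀ i : ℕ, Y (i + 1) ⟶ Y i)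
      (L : C) (g : L ⟶ ∏ᶜ Y) (h : ∏ᶜ Y ⟶ L⟦(1 : ℤ)⟧)
      (htri : Triangle.mk g
        (Limits.Pi.lift (fun i : ℕ => Limits.Pi.π Y i - Limits.Pi.π Y (i + 1) ≫ φ i)) h ∈
        (distTriang C))
      (Z : ℕ → C) (u : ∀ i : ℕ, Y i ⟶ Z i) (v : ∀ i : ℕ, Z i ⟶ (Y (i + 1))⟦(1 : ℤ)⟧)
      (hcone : ∀ i : ℕ, Triangle.mk (φ i) (u i) (v i) ∈ (distTriang C))
      (hY0 : Coenvelope S (Y 0))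
      (hZ : ∀ i : ℕ, Coenvelope S ((Z i)⟦(-1 : ℤ)⟧)) : Coenvelope S L

variable {C}

/-- Lemma 2.2.5: if `D ⊥ S`, then `D` is also left-orthogonal to the coenvelope of `S`. -/
theorem orthogonal_to_coenvelope [HasProducts.{v} C]
    (D S : Set C) (hDS : ∀ X ∈ D, ∀ Y ∈ S, ∀ f : X ⟶ Y, f = 0) :
    ∀ X ∈ D, ∀ Y : C, Coenvelope S Y → ∀ f : X ⟶ Y, f = 0 := by
  intro X hX Y hY
  induction hY with
  | base W hW => exact fun f => hDS X hX W hW f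
  | zero W hW => exact fun f => hW.eq_of_tgt f 0
  | prod Z hZ ih =>
      exact fun f => Pi.hom_ext f 0 fun i => by rw [zero_comp]; exact ih i _
  | holim Y φ L g h htri Z u v hcone hY0 hZ ihY0 ihZ =>
      -- Step 1: `Hom(X, Y i) = 0` for all `i`, by induction on `i`.
      have hYi : ∀ (i : ℕ) (f : X ⟶ Y i), f = 0 := by
        intro i
        induction i with
        | zero => exact ihY0
        | succ i ih =>
            intro f
            obtain ⟨g', hg'⟩ := Triangle.coyoneda_exact₂ _
              (inv_rot_of_distTriang _ (hcone i)) f (ih (f ≫ φ i))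
            rw [hg', ihZ i g']; exact zero_comp
      -- Step 2: the maps `Hom(X, Y (i+1)⟦-1⟧) → Hom(X, Y i⟦-1⟧)` are surjective.
      have hsurj : ∀ (i : ℕ) (b : X ⟶ (Y i)⟦(-1 : ℤ)⟧),
          ∃ a : X ⟶ (Y (i + 1))⟦(-1 : ℤ)⟧, a ≫ (φ i)⟦(-1 : ℤ)⟧' = b := by
        intro i b
        obtain ⟨a, ha⟩ := Triangle.coyoneda_exact₂ _
          (Triangle.shift_distinguished _ (hcone i) (-1)) b (ihZ i _)
        refine ⟨(-1 : ℤ).negOnePow • a, ?_⟩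
        dsimp at ha
        rw [ha]
        erw [Linear.units_smul_comp]
        exact (Linear.comp_units_smul _ _ _).symm

      choose s hs using hsurj
      -- Step 3: `Hom(X, ∏ Y) = 0`.
      have hprod0 : ∀ f : X ⟶ ∏ᶜ Y, f = 0 := fun f =>
        Pi.hom_ext f 0 fun i => by rw [zero_comp]; exact hYi i _
      -- Main argument.
      intro f
      set d : (∏ᶜ Y : C) ⟶ ∏ᶜ Y :=
        Limits.Pi.lift (fun i : ℕ => Limits.Pi.π Y i - Limits.Pi.π Y (i + 1) ≫ φ i) with hd
      obtain ⟨f', hf'⟩ := Triangle.coyoneda_exact₂ _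
        (inv_rot_of_distTriang _ htri) f (hprod0 _)
      -- the fan of shifted projections is a limit fan
      let F : IsLimit (Fan.mk ((∏ᶜ Y : C)⟦(-1 : ℤ)⟧)
          (fun i : ℕ => (Pi.π Y i)⟦(-1 : ℤ)⟧')) :=
        isLimitFanMkObjOfIsLimit (shiftFunctor C (-1 : ℤ)) Y (Pi.π Y) (productIsProduct Y)
      -- the components of `f'` and the recursively chosen preimages
      let a : ∀ i : ℕ, X ⟶ (Y i)⟦(-1 : ℤ)⟧ := fun i =>
        Nat.rec 0 (fun j aj => s j (aj - f' ≫ (Pi.π Y j)⟦(-1 : ℤ)⟧')) i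
      have ha : ∀ i : ℕ, a (i + 1) ≫ (φ i)⟦(-1 : ℤ)⟧' =
          a i - f' ≫ (Pi.π Y i)⟦(-1 : ℤ)⟧' := fun i => hs i _
      let A : X ⟶ (∏ᶜ Y : C)⟦(-1 : ℤ)⟧ := F.lift (Fan.mk X a)
      have hA : ∀ i : ℕ, A ≫ (Pi.π Y i)⟦(-1 : ℤ)⟧' = a i := fun i =>
        F.fac (Fan.mk X a) ⟨i⟩
      have hAd : A ≫ d⟦(-1 : ℤ)⟧' = f' := by
        apply F.hom_ext
        rintro ⟨i⟩
        have hdi : d ≫ Pi.π Y i = Pi.π Y i - Pi.π Y (i + 1) ≫ φ i := by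
          simp [hd]
        dsimp [Fan.mk]
        rw [assoc, ← Functor.map_comp, hdi, Functor.map_sub, Functor.map_comp,
          Preadditive.comp_sub, ← assoc, hA, hA, ha]
        abel
      have hdh : d ≫ h = 0 := comp_distTriang_mor_zero₂₃ _ htri
      have hdm : d⟦(-1 : ℤ)⟧' ≫ (Triangle.mk g d h).invRotate.mor₁ = 0 := by
        dsimp [Triangle.invRotate]
        erw [Preadditive.comp_neg, ← Functor.map_comp_assoc, hdh, Functor.map_zero, zero_comp,
          neg_zero]
        rfl
      rw [hf', ← hAd]; erw [assoc, hdm, comp_zero]; rfl
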